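/- Let k ∈ (−π, −π/2) with k ≠ −3π/4 and set ηⱼ = (2j−1)k. Then for all x ∈ ℝ, all t ∈ [0, 1), and all α ≥ 1/2, lim_{L→∞} Σ_{j=1}^{⌊Lt⌋} sin(x − ηⱼ)/(L − j)^α = 0 and lim_{L→∞} Σ_{j=1}^{⌊Lt⌋} cos(x − ηⱼ)/(L − j)^α = 0, where L runs over the positive integers. -/

import Mathlib

open Filter Real

/-- Telescoping sum. -/
lemma tele_aux (w : ℕ → ℝ) (n : ℕ) :
    ∑ j ∈ Finset.Icc 1 n, (w (j + 1) - w j) = w (n + 1) - w 1 := by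
  induction n with
  | zero => simp
  | succ n ih =>
    rw [Finset.sum_Icc_succ_top (by omega : 1 ≤ n + 1), ih]
    ring

/-- Abel summation identity. -/
lemma abel_id_aux (c w : ℕ → ℝ) (n : ℕ) :
    ∑ j ∈ Finset.Icc 1 n, c j * w j
      = (∑ j ∈ Finset.Icc 1 n, c j) * w (n + 1)
        + ∑ j ∈ Finset.Icc 1 n, (∑ i ∈ Finset.Icc 1 j, c i) * (w j - w (j + 1)) := by
  induction n with
  | zero => simp
  | succ n ih =>
    rw [Finset.sum_Icc_succ_top (by omega : 1 ≤ n + 1),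
      Finset.sum_Icc_succ_top (by omega : 1 ≤ n + 1),
      Finset.sum_Icc_succ_top (by omega : 1 ≤ n + 1),
      Finset.sum_Icc_succ_top (by omega : 1 ≤ n + 1), ih]
    ring

lemma mono_of_step_aux (w : ℕ → ℝ) (n : ℕ)
    (h : ∀ j, 1 ≤ j → j ≤ n → w j ≤ w (j + 1)) :
    ∀ j, 1 ≤ j → j ≤ n + 1 → w j ≤ w (n + 1) := by
  induction n with
  | zero =>
    intro j h1 h2
    have : j = 1 := by omega
    simp [this]
  | succ n ih =>
    intro j h1 h2
    rcases Nat.lt_or_ge j (n + 2) with hlt | hge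
    · exact (ih (fun j a b => h j a (by omega)) j h1 (by omega)).trans
        (h (n + 1) (by omega) (by omega))
    · have : j = n + 2 := by omega
      simp [this]

/-- Abel summation bound. -/
lemma abel_bound_aux (c w : ℕ → ℝ) (M : ℝ) (n : ℕ)
    (hM : ∀ m, |∑ j ∈ Finset.Icc 1 m, c j| ≤ M)
    (hmono : ∀ j, 1 ≤ j → j ≤ n → w j ≤ w (j + 1))
    (h1 : 0 ≤ w 1) :
    |∑ j ∈ Finset.Icc 1 n, c j * w j| ≤ 2 * M * w (n + 1) := by
  have hM0 : 0 ≤ M := (abs_nonneg _).trans (hM 0)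
  have hchain := mono_of_step_aux w n hmono
  have hwn : 0 ≤ w (n + 1) := h1.trans (hchain 1 le_rfl (by omega))
  rw [abel_id_aux]
  have hA : |(∑ j ∈ Finset.Icc 1 n, c j) * w (n + 1)| ≤ M * w (n + 1) := by
    rw [abs_mul, abs_of_nonneg hwn]
    exact mul_le_mul_of_nonneg_right (hM n) hwn
  have hB : |∑ j ∈ Finset.Icc 1 n, (∑ i ∈ Finset.Icc 1 j, c i) * (w j - w (j + 1))|
      ≤ M * (w (n + 1) - w 1) := by
    calc |∑ j ∈ Finset.Icc 1 n, (∑ i ∈ Finset.Icc 1 j, c i) * (w j - w (j + 1))|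
        ≤ ∑ j ∈ Finset.Icc 1 n, |(∑ i ∈ Finset.Icc 1 j, c i) * (w j - w (j + 1))| :=
          Finset.abs_sum_le_sum_abs _ _
      _ ≤ ∑ j ∈ Finset.Icc 1 n, M * (w (j + 1) - w j) := by
          apply Finset.sum_le_sum
          intro j hj
          simp only [Finset.mem_Icc] at hj
          rw [abs_mul, abs_sub_comm, abs_of_nonneg (sub_nonneg.mpr (hmono j hj.1 hj.2))]
          exact mul_le_mul_of_nonneg_right (hM j) (sub_nonneg.mpr (hmono j hj.1 hj.2))
      _ = M * (w (n + 1) - w 1) := by rw [← Finset.mul_sum, tele_aux]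
  calc |(∑ j ∈ Finset.Icc 1 n, c j) * w (n + 1)
        + ∑ j ∈ Finset.Icc 1 n, (∑ i ∈ Finset.Icc 1 j, c i) * (w j - w (j + 1))|
      ≤ |(∑ j ∈ Finset.Icc 1 n, c j) * w (n + 1)|
        + |∑ j ∈ Finset.Icc 1 n, (∑ i ∈ Finset.Icc 1 j, c i) * (w j - w (j + 1))| :=
        abs_add_le _ _
    _ ≤ M * w (n + 1) + M * (w (n + 1) - w 1) := add_le_add hA hB
    _ ≤ 2 * M * w (n + 1) := by nlinarith

/-- Core decay lemma: if the partial sums of `c` are bounded, the weighted sums tend to 0. -/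
lemma decay_aux (c : ℕ → ℝ) (M : ℝ) (hM : ∀ m, |∑ j ∈ Finset.Icc 1 m, c j| ≤ M)
    (t α : ℝ) (ht0 : 0 ≤ t) (ht1 : t < 1) (hα : 1 / 2 ≤ α) :
    Tendsto (fun L : ℕ => ∑ j ∈ Finset.Icc 1 ⌊(L : ℝ) * t⌋₊,
      c j / ((L : ℝ) - (j : ℝ)) ^ α) atTop (nhds 0) := by
  have hM0 : 0 ≤ M := (abs_nonneg _).trans (hM 0)
  have hα0 : (0 : ℝ) < α := by linarith
  have h1t : (0 : ℝ) < 1 - t := by linarith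
  have hu : Tendsto (fun L : ℕ => (L : ℝ) * (1 - t) - 1) atTop atTop := by
    have h2 : Tendsto (fun L : ℕ => (L : ℝ) * (1 - t)) atTop atTop :=
      Tendsto.atTop_mul_const h1t tendsto_natCast_atTop_atTop
    simpa [sub_eq_add_neg] using tendsto_atTop_add_const_right atTop (-1 : ℝ) h2
  have hg : Tendsto (fun L : ℕ => 2 * M / ((L : ℝ) * (1 - t) - 1) ^ α) atTop (nhds 0) := by
    have h2 : Tendsto (fun L : ℕ => ((L : ℝ) * (1 - t) - 1) ^ α) atTop atTop :=
      (tendsto_rpow_atTop hα0).comp hu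
    have := h2.inv_tendsto_atTop.const_mul (2 * M)
    simpa [div_eq_mul_inv] using this
  apply squeeze_zero_norm' ?_ hg
  filter_upwards [(tendsto_natCast_atTop_atTop (R := ℝ)).eventually_ge_atTop (2 / (1 - t))]
    with L hL
  set n := ⌊(L : ℝ) * t⌋₊ with hn
  have hL2 : (2 : ℝ) ≤ (L : ℝ) * (1 - t) := by
    rw [div_le_iff₀ h1t] at hL; linarith
  have hL0 : (0 : ℝ) ≤ L := Nat.cast_nonneg L
  have hLt : (L : ℝ) * (1 - t) ≤ L := by nlinarith
  have hnle : (n : ℝ) ≤ (L : ℝ) * t := Nat.floor_le (by positivity)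
  have hu1 : (1 : ℝ) ≤ (L : ℝ) * (1 - t) - 1 := by linarith
  have hgap : (L : ℝ) * (1 - t) - 1 ≤ (L : ℝ) - ((n : ℝ) + 1) := by nlinarith
  set w : ℕ → ℝ := fun j => 1 / ((L : ℝ) - (j : ℝ)) ^ α with hw
  have hsum : ∑ j ∈ Finset.Icc 1 n, c j / ((L : ℝ) - (j : ℝ)) ^ α
      = ∑ j ∈ Finset.Icc 1 n, c j * w j :=
    Finset.sum_congr rfl fun j _ => div_eq_mul_one_div _ _
  have hmono : ∀ j, 1 ≤ j → j ≤ n → w j ≤ w (j + 1) := by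
    intro j hj1 hjn
    have hjn' : (j : ℝ) + 1 ≤ (n : ℝ) + 1 := by exact_mod_cast Nat.succ_le_succ hjn
    have hb : (0 : ℝ) < (L : ℝ) - ((j : ℝ) + 1) := by linarith
    have hb2 : (L : ℝ) - ((j : ℝ) + 1) ≤ (L : ℝ) - (j : ℝ) := by linarith
    have := one_div_le_one_div_of_le (Real.rpow_pos_of_pos hb α)
      (Real.rpow_le_rpow hb.le hb2 hα0.le)
    simpa [hw] using this
  have h1 : 0 ≤ w 1 := by
    have : (0 : ℝ) ≤ (L : ℝ) - 1 := by linarith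
    simp only [hw, Nat.cast_one]
    positivity
  have key := abel_bound_aux c w M n hM hmono h1
  have hwn1 : w (n + 1) ≤ 1 / ((L : ℝ) * (1 - t) - 1) ^ α := by
    have hb : (0 : ℝ) < (L : ℝ) * (1 - t) - 1 := by linarith
    have := one_div_le_one_div_of_le (Real.rpow_pos_of_pos hb α)
      (Real.rpow_le_rpow hb.le hgap hα0.le)
    simpa [hw] using this
  calc ‖∑ j ∈ Finset.Icc 1 n, c j / ((L : ℝ) - (j : ℝ)) ^ α‖
      = |∑ j ∈ Finset.Icc 1 n, c j * w j| := by rw [Real.norm_eq_abs, hsum]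
    _ ≤ 2 * M * w (n + 1) := key
    _ ≤ 2 * M * (1 / ((L : ℝ) * (1 - t) - 1) ^ α) :=
        mul_le_mul_of_nonneg_left hwn1 (by linarith)
    _ = 2 * M / ((L : ℝ) * (1 - t) - 1) ^ α := (div_eq_mul_one_div _ _).symm

/-- Boundedness of the trigonometric partial sums. -/
lemma bounded_partial_aux (k x : ℝ) (hk1 : -π < k) (hk2 : k < -(π / 2)) :
    ∃ M : ℝ,
      (∀ m : ℕ, |∑ j ∈ Finset.Icc 1 m, Real.sin (x - (2 * (j : ℝ) - 1) * k)| ≤ M) ∧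
      (∀ m : ℕ, |∑ j ∈ Finset.Icc 1 m, Real.cos (x - (2 * (j : ℝ) - 1) * k)| ≤ M) := by
  set r : ℂ := Complex.exp (((-2 * k : ℝ) : ℂ) * Complex.I) with hrdef
  have hr : r ≠ 1 := by
    intro h
    rw [hrdef, Complex.exp_eq_one_iff] at h
    obtain ⟨m, hm⟩ := h
    have him := congrArg Complex.im hm
    simp [Complex.mul_I_im] at him
    have hπ := Real.pi_pos
    have h1 : (1 : ℝ) / 2 < (m : ℝ) := by nlinarith
    have h2 : (m : ℝ) < 1 := by nlinarith
    have hm1 : (1 : ℤ) ≤ m := by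
      have : (0 : ℤ) < m := by exact_mod_cast (by linarith : (0 : ℝ) < (m : ℝ))
      omega
    have : (1 : ℝ) ≤ (m : ℝ) := by exact_mod_cast hm1
    linarith
  have hr1 : 0 < ‖r - 1‖ := norm_pos_iff.mpr (sub_ne_zero.mpr hr)
  have key : ∀ m : ℕ, ‖∑ j ∈ Finset.Icc 1 m,
      Complex.exp (((x - (2 * (j : ℝ) - 1) * k : ℝ) : ℂ) * Complex.I)‖
      ≤ 2 / ‖r - 1‖ := by
    intro m
    have hj : ∀ j : ℕ, Complex.exp (((x - (2 * (j : ℝ) - 1) * k : ℝ) : ℂ) * Complex.I)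
        = Complex.exp (((x + k : ℝ) : ℂ) * Complex.I) * r ^ j := by
      intro j
      rw [hrdef, ← Complex.exp_nat_mul, ← Complex.exp_add]
      congr 1
      push_cast
      ring
    rw [Finset.sum_congr rfl fun j _ => hj j, ← Finset.mul_sum, norm_mul,
      Complex.norm_exp_ofReal_mul_I, one_mul]
    have hicc : ∑ j ∈ Finset.Icc 1 m, r ^ j = ∑ j ∈ Finset.Ico 1 (m + 1), r ^ j := by
      rw [Finset.Ico_add_one_right_eq_Icc]
    rw [hicc, geom_sum_Ico hr (by omega), norm_div]
    have habs : ‖r ^ (m + 1) - r ^ 1‖ ≤ 2 := by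
      have h1 : ‖r‖ = 1 := by rw [hrdef]; exact Complex.norm_exp_ofReal_mul_I _
      calc ‖r ^ (m + 1) - r ^ 1‖ ≤ ‖r ^ (m + 1)‖ + ‖r ^ 1‖ := norm_sub_le _ _
        _ = 2 := by rw [norm_pow, norm_pow, h1]; norm_num
    exact div_le_div_of_nonneg_right habs hr1.le |>.trans_eq rfl
  refine ⟨2 / ‖r - 1‖, fun m => ?_, fun m => ?_⟩
  · have him : ∑ j ∈ Finset.Icc 1 m, Real.sin (x - (2 * (j : ℝ) - 1) * k)
        = (∑ j ∈ Finset.Icc 1 m,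
            Complex.exp (((x - (2 * (j : ℝ) - 1) * k : ℝ) : ℂ) * Complex.I)).im := by
      rw [Complex.im_sum]
      exact Finset.sum_congr rfl fun j _ => (Complex.exp_ofReal_mul_I_im _).symm
    rw [him]
    exact (Complex.abs_im_le_norm _).trans (key m)
  · have hre : ∑ j ∈ Finset.Icc 1 m, Real.cos (x - (2 * (j : ℝ) - 1) * k)
        = (∑ j ∈ Finset.Icc 1 m,
            Complex.exp (((x - (2 * (j : ℝ) - 1) * k : ℝ) : ℂ) * Complex.I)).re := by
      rw [Complex.re_sum]
      exact Finset.sum_congr rfl fun j _ => (Complex.exp_ofReal_mul_I_re _).symm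
    rw [hre]
    exact (Complex.abs_re_le_norm _).trans (key m)

theorem trig_sums_decaying_first_order (k : ℝ) (hk1 : -π < k) (hk2 : k < -(π / 2))
    (hk3 : k ≠ -(3 * π / 4)) (x t α : ℝ) (ht0 : 0 ≤ t) (ht1 : t < 1)
    (hα : 1 / 2 ≤ α) :
    Tendsto (fun L : ℕ => ∑ j ∈ Finset.Icc 1 ⌊(L : ℝ) * t⌋₊,
        Real.sin (x - (2 * (j : ℝ) - 1) * k) / ((L : ℝ) - (j : ℝ)) ^ α)
      atTop (nhds 0) ∧
    Tendsto (fun L : ℕ => ∑ j ∈ Finset.Icc 1 ⌊(L : ℝ) * t⌋₊,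
        Real.cos (x - (2 * (j : ℝ) - 1) * k) / ((L : ℝ) - (j : ℝ)) ^ α)
      atTop (nhds 0) := by
  obtain ⟨M, hMs, hMc⟩ := bounded_partial_aux k x hk1 hk2
  exact ⟨decay_aux _ M hMs t α ht0 ht1 hα, decay_aux _ M hMc t α ht0 ht1 hα⟩
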